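/- arXiv:2409.19316 — 2 statements merged into one kernel-verified Lean document; each statement's English description precedes it below -/
import Mathlib

section
/- For a multiuser downlink with channel vectors h₁,…,h_K ∈ ℂ^{MN}, beamformers w₁,…,w_K ∈ ℂ^{MN} with Σ_k ‖w_k‖₂² ≤ P, and SINR γ_k = |h_kᴴw_k|²/(Σ_{j≠k}|h_kᴴw_j|² + σ²), it holds that min_k γ_k ≤ (P/σ²)·(Σ_{k=1}^K 1/‖h_k‖₂²)^{-1}. -/
open Finset Complex

/-- SDMA max-min SINR bound: for channels `h_k`, beamformers `w_k` with total power `≤ P`,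
the minimum SINR is at most `(P/σ²)(Σ_k 1/‖h_k‖₂²)⁻¹`. -/
theorem stmt5 (MN K : ℕ) (hK : 0 < K) (h w : Fin K → Fin MN → ℂ)
    (hnz : ∀ k, h k ≠ 0) (σ2 P : ℝ) (hσ : 0 < σ2) (hP : 0 < P)
    (hpow : ∑ k, ∑ i, ‖w k i‖ ^ 2 ≤ P) :
    Finset.univ.inf' (Finset.univ_nonempty_iff.mpr ⟨⟨0, hK⟩⟩)
      (fun k => ‖∑ i, (starRingEnd ℂ) (h k i) * w k i‖ ^ 2 /
        ((∑ j ∈ Finset.univ.erase k, ‖∑ i, (starRingEnd ℂ) (h k i) * w j i‖ ^ 2) + σ2))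
    ≤ (P / σ2) * (∑ k, (∑ i, ‖h k i‖ ^ 2)⁻¹)⁻¹ := by
  set m := Finset.univ.inf' (Finset.univ_nonempty_iff.mpr ⟨⟨0, hK⟩⟩)
      (fun k => ‖∑ i, (starRingEnd ℂ) (h k i) * w k i‖ ^ 2 /
        ((∑ j ∈ Finset.univ.erase k, ‖∑ i, (starRingEnd ℂ) (h k i) * w j i‖ ^ 2) + σ2))
    with hm
  have hH : ∀ k, 0 < ∑ i, ‖h k i‖ ^ 2 := by
    intro k
    obtain ⟨i, hi⟩ := Function.ne_iff.mp (hnz k)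
    refine Finset.sum_pos' (fun j _ => by positivity) ⟨i, Finset.mem_univ i, ?_⟩
    have : ‖h k i‖ ≠ 0 := by simpa using hi
    positivity
  have hS : 0 < ∑ k, (∑ i, ‖h k i‖ ^ 2)⁻¹ := by
    refine Finset.sum_pos (fun k _ => inv_pos.mpr (hH k)) ⟨⟨0, hK⟩, Finset.mem_univ _⟩
  have hm0 : 0 ≤ m := by
    refine Finset.le_inf' _ _ (fun k _ => ?_)
    have hden : 0 < (∑ j ∈ Finset.univ.erase k,
        ‖∑ i, (starRingEnd ℂ) (h k i) * w j i‖ ^ 2) + σ2 := by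
      have : (0:ℝ) ≤ ∑ j ∈ Finset.univ.erase k,
          ‖∑ i, (starRingEnd ℂ) (h k i) * w j i‖ ^ 2 :=
        Finset.sum_nonneg (fun j _ => by positivity)
      linarith
    positivity
  have key : ∀ k : Fin K, m * (∑ i, ‖h k i‖ ^ 2)⁻¹ ≤
      (∑ i, ‖w k i‖ ^ 2) / σ2 := by
    intro k
    have h1 : m ≤ ‖∑ i, (starRingEnd ℂ) (h k i) * w k i‖ ^ 2 /
        ((∑ j ∈ Finset.univ.erase k, ‖∑ i, (starRingEnd ℂ) (h k i) * w j i‖ ^ 2) + σ2) :=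
      Finset.inf'_le _ (Finset.mem_univ k)
    have hIsum : (0:ℝ) ≤ ∑ j ∈ Finset.univ.erase k,
        ‖∑ i, (starRingEnd ℂ) (h k i) * w j i‖ ^ 2 :=
      Finset.sum_nonneg (fun j _ => by positivity)
    have h2 : ‖∑ i, (starRingEnd ℂ) (h k i) * w k i‖ ^ 2 /
        ((∑ j ∈ Finset.univ.erase k, ‖∑ i, (starRingEnd ℂ) (h k i) * w j i‖ ^ 2) + σ2)
        ≤ ‖∑ i, (starRingEnd ℂ) (h k i) * w k i‖ ^ 2 / σ2 := by
      apply div_le_div_of_nonneg_left (by positivity) hσ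
      linarith
    -- Cauchy–Schwarz
    have hcs : ‖∑ i, (starRingEnd ℂ) (h k i) * w k i‖ ^ 2 ≤
        (∑ i, ‖h k i‖ ^ 2) * (∑ i, ‖w k i‖ ^ 2) := by
      have habs : ‖∑ i, (starRingEnd ℂ) (h k i) * w k i‖ ≤
          ∑ i, ‖h k i‖ * ‖w k i‖ := by
        refine (norm_sum_le _ _).trans (le_of_eq (Finset.sum_congr rfl (fun i _ => ?_)))
        rw [norm_mul]
        simp
      calc ‖∑ i, (starRingEnd ℂ) (h k i) * w k i‖ ^ 2
          ≤ (∑ i, ‖h k i‖ * ‖w k i‖) ^ 2 := by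
            have := norm_nonneg (∑ i, (starRingEnd ℂ) (h k i) * w k i)
            nlinarith
        _ ≤ (∑ i, ‖h k i‖ ^ 2) * (∑ i, ‖w k i‖ ^ 2) :=
            Finset.sum_mul_sq_le_sq_mul_sq _ _ _
    have h3 : m ≤ (∑ i, ‖h k i‖ ^ 2) * (∑ i, ‖w k i‖ ^ 2) / σ2 := by
      refine h1.trans (h2.trans ?_)
      gcongr
    rw [mul_inv_le_iff₀ (hH k)]
    refine h3.trans (le_of_eq (by ring))
  have hsum : m * (∑ k, (∑ i, ‖h k i‖ ^ 2)⁻¹) ≤ P / σ2 := by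
    calc m * (∑ k, (∑ i, ‖h k i‖ ^ 2)⁻¹)
        = ∑ k, m * (∑ i, ‖h k i‖ ^ 2)⁻¹ := by rw [Finset.mul_sum]
      _ ≤ ∑ k, (∑ i, ‖w k i‖ ^ 2) / σ2 :=
          Finset.sum_le_sum (fun k _ => key k)
      _ = (∑ k, ∑ i, ‖w k i‖ ^ 2) / σ2 := by rw [Finset.sum_div]
      _ ≤ P / σ2 := by gcongr
  calc m = m * ((∑ k, (∑ i, ‖h k i‖ ^ 2)⁻¹) *
        (∑ k, (∑ i, ‖h k i‖ ^ 2)⁻¹)⁻¹) := by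
          rw [mul_inv_cancel₀ hS.ne', mul_one]
    _ = m * (∑ k, (∑ i, ‖h k i‖ ^ 2)⁻¹) *
        (∑ k, (∑ i, ‖h k i‖ ^ 2)⁻¹)⁻¹ := by ring
    _ ≤ (P / σ2) * (∑ k, (∑ i, ‖h k i‖ ^ 2)⁻¹)⁻¹ :=
        mul_le_mul_of_nonneg_right hsum (inv_nonneg.mpr hS.le)
end

section
/- Let t₁,…,t_M ∈ ℝ³, points s₁,…,s_K ∈ ℝ³, and h_k = b_k·(e^{j(2π/λ)‖t₁−s_k‖},…,e^{j(2π/λ)‖t_M−s_k‖})ᵀ with b_k ≠ 0. Then there exists a unit-modulus-scaled vector w = e^{jφ}/√M (entrywise |w_m| = 1/√M) with |h_kᴴw| = ‖h_k‖₂ simultaneously for all k = 1,…,K if and only if for each k ∈ {2,…,K} there exists a constant c_k ∈ ℝ such that ‖t_m−s₁‖ − ‖t_m−s_k‖ ≡ c_k (mod λ) for every m = 1,…,M. -/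
open Finset Complex

/-- Theorem 2: there exists a constant-modulus beamformer `w` (|w_m| = 1/√M) that is
simultaneously phase-aligned with every user's channel (`|h_kᴴw| = ‖h_k‖₂` for all `k`)
iff for each user `k ≠ 1` the distance difference `‖t_m−s₁‖ − ‖t_m−s_k‖` is constant
modulo `λ` over `m`. -/
theorem stmt8 (M K : ℕ) (hM : 0 < M) (hK : 0 < K)
    (t : Fin M → EuclideanSpace ℝ (Fin 3)) (s : Fin K → EuclideanSpace ℝ (Fin 3))
    (lam : ℝ) (hlam : 0 < lam) (b : Fin K → ℂ) (hb : ∀ k, b k ≠ 0) :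
    letI h : Fin K → Fin M → ℂ := fun k m =>
      b k * Complex.exp (Complex.I * (2 * Real.pi / lam * dist (t m) (s k)))
    ((∃ w : Fin M → ℂ, (∀ m, ‖w m‖ = 1 / Real.sqrt M) ∧
        ∀ k, ‖∑ m, (starRingEnd ℂ) (h k m) * w m‖
          = Real.sqrt (∑ m, ‖h k m‖ ^ 2)) ↔
      (∀ k : Fin K, k ≠ ⟨0, hK⟩ → ∃ c : ℝ, ∀ m, ∃ n : ℤ,
        dist (t m) (s ⟨0, hK⟩) - dist (t m) (s k) = c + n * lam)) := by
  beta_reduce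
  set h : Fin K → Fin M → ℂ := fun k m =>
      b k * Complex.exp (Complex.I * (2 * Real.pi / lam * dist (t m) (s k))) with hdef
  set k0 : Fin K := ⟨0, hK⟩ with hk0def
  set m0 : Fin M := ⟨0, hM⟩ with hm0def
  set θ : Fin K → Fin M → ℝ := fun k m => 2 * Real.pi / lam * dist (t m) (s k) with hθdef
  have hMpos : (0:ℝ) < M := by exact_mod_cast hM
  have hsM : (0:ℝ) < Real.sqrt M := Real.sqrt_pos.2 hMpos
  have hpi := Real.pi_pos
  have hform : ∀ k m, h k m = b k * Complex.exp ((θ k m : ℝ) * Complex.I) := by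
    intro k m
    simp only [hdef, hθdef]
    push_cast
    ring_nf
  have habs : ∀ k m, ‖h k m‖ = ‖b k‖ := by
    intro k m
    rw [hform, norm_mul, Complex.norm_exp_ofReal_mul_I, mul_one]
  have hrhs : ∀ k, Real.sqrt (∑ m, ‖h k m‖ ^ 2)
      = Real.sqrt M * ‖b k‖ := by
    intro k
    have : ∑ m : Fin M, ‖h k m‖ ^ 2 = (M : ℝ) * ‖b k‖ ^ 2 := by
      simp [habs, Finset.sum_const, mul_comm]
    rw [this, Real.sqrt_mul (le_of_lt hMpos), Real.sqrt_sq (norm_nonneg _)]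
  constructor
  · -- forward direction
    rintro ⟨w, hw1, hw2⟩ k hk
    -- interpret as inner products in EuclideanSpace
    set W : EuclideanSpace ℂ (Fin M) := WithLp.toLp 2 w with hWdef
    set H : Fin K → EuclideanSpace ℂ (Fin M) := fun j => WithLp.toLp 2 (h j) with hHdef
    have hWnorm : ‖W‖ = 1 := by
      rw [EuclideanSpace.norm_eq]
      have : ∑ m : Fin M, ‖W m‖ ^ 2 = 1 := by
        have : ∀ m : Fin M, ‖W m‖ ^ 2 = 1 / (M : ℝ) := by
          intro m
          show ‖w m‖ ^ 2 = 1 / (M : ℝ)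
          rw [hw1 m]
          rw [div_pow, one_pow, Real.sq_sqrt (le_of_lt hMpos)]
        rw [Finset.sum_congr rfl (fun m _ => this m), Finset.sum_const,
          Finset.card_univ, Fintype.card_fin, nsmul_eq_mul]
        field_simp
      rw [this, Real.sqrt_one]
    have hHnorm : ∀ j, ‖H j‖ = Real.sqrt (∑ m, ‖h j m‖ ^ 2) := by
      intro j
      rw [EuclideanSpace.norm_eq]
    have hinner : ∀ j, (inner ℂ (H j) W : ℂ) = ∑ m, (starRingEnd ℂ) (h j m) * w m := by
      intro j
      rw [PiLp.inner_apply]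
      exact Finset.sum_congr rfl fun m _ => by rw [RCLike.inner_apply']
    have hH0 : ∀ j, H j ≠ 0 := by
      intro j hj
      have : h j m0 = 0 := congrArg (fun v => v m0) hj
      exact (mul_ne_zero (hb j) (Complex.exp_ne_zero _)) this
    have hW0 : W ≠ 0 := by
      intro hw
      have : ‖w m0‖ = 0 := by
        have : w m0 = 0 := congrArg (fun v => v m0) hw
        rw [this]; simp
      rw [hw1 m0] at this
      have : (1 : ℝ) / Real.sqrt M ≠ 0 := by positivity
      exact this ‹_›
    have key : ∀ j, ∃ r : ℂ, r ≠ 0 ∧ W = r • H j := by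
      intro j
      apply (norm_inner_eq_norm_iff (hH0 j) hW0).1
      rw [hWnorm, mul_one, hHnorm j, hinner j]
      exact hw2 j
    obtain ⟨r1, hr1, hr1w⟩ := key k0
    obtain ⟨rk, hrk, hrkw⟩ := key k
    have heq : ∀ m, r1 * H k0 m = rk * H k m := by
      intro m
      have e1 : w m = r1 * h k0 m := by
        have := congrArg (fun v => v m) hr1w
        simpa [PiLp.smul_apply, smul_eq_mul] using this
      have e2 : w m = rk * h k m := by
        have := congrArg (fun v => v m) hrkw
        simpa [PiLp.smul_apply, smul_eq_mul] using this
      rw [← e1, e2]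
    refine ⟨dist (t m0) (s k0) - dist (t m0) (s k), fun m => ?_⟩
    have h1 : r1 * h k0 m = rk * h k m := heq m
    have h2 : r1 * h k0 m0 = rk * h k m0 := heq m0
    rw [hform, hform] at h1
    rw [hform, hform] at h2
    -- cross-multiplied exponential equation
    have hcross : Complex.exp ((θ k0 m : ℝ) * Complex.I) * Complex.exp ((θ k m0 : ℝ) * Complex.I)
        = Complex.exp ((θ k m : ℝ) * Complex.I) * Complex.exp ((θ k0 m0 : ℝ) * Complex.I) := by
      have hne : r1 * b k0 ≠ 0 := mul_ne_zero hr1 (hb k0)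
      apply mul_left_cancel₀ hne
      calc r1 * b k0 * (Complex.exp ((θ k0 m : ℝ) * Complex.I) * Complex.exp ((θ k m0 : ℝ) * Complex.I))
          = (r1 * (b k0 * Complex.exp ((θ k0 m : ℝ) * Complex.I))) * Complex.exp ((θ k m0 : ℝ) * Complex.I) := by ring
        _ = (rk * (b k * Complex.exp ((θ k m : ℝ) * Complex.I))) * Complex.exp ((θ k m0 : ℝ) * Complex.I) := by rw [h1]
        _ = (rk * (b k * Complex.exp ((θ k m0 : ℝ) * Complex.I))) * Complex.exp ((θ k m : ℝ) * Complex.I) := by ring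
        _ = (r1 * (b k0 * Complex.exp ((θ k0 m0 : ℝ) * Complex.I))) * Complex.exp ((θ k m : ℝ) * Complex.I) := by rw [h2]
        _ = r1 * b k0 * (Complex.exp ((θ k m : ℝ) * Complex.I) * Complex.exp ((θ k0 m0 : ℝ) * Complex.I)) := by ring
    rw [← Complex.exp_add, ← Complex.exp_add] at hcross
    obtain ⟨n, hn⟩ := Complex.exp_eq_exp_iff_exists_int.1 hcross
    -- take imaginary parts
    have him : θ k0 m + θ k m0 = θ k m + θ k0 m0 + n * (2 * Real.pi) := by
      have := congrArg Complex.im hn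
      simpa [Complex.add_im, Complex.mul_im, Complex.mul_re] using this
    refine ⟨n, ?_⟩
    have hlam' : lam ≠ 0 := ne_of_gt hlam
    have hpi' : Real.pi ≠ 0 := ne_of_gt hpi
    have hfac : (2 * Real.pi / lam) ≠ 0 := by positivity
    apply mul_left_cancel₀ hfac
    have expand : 2 * Real.pi / lam * (dist (t m0) (s k0) - dist (t m0) (s k) + n * lam)
        = θ k0 m0 - θ k m0 + n * (2 * Real.pi) := by
      simp only [hθdef]
      field_simp
    rw [mul_sub]
    show θ k0 m - θ k m = _
    rw [expand]
    linarith [him]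
  · -- backward direction
    intro hc
    refine ⟨fun m => ((Real.sqrt M : ℝ) : ℂ)⁻¹ * Complex.exp ((θ k0 m : ℝ) * Complex.I), fun m => ?_, ?_⟩
    · rw [norm_mul, norm_inv, Complex.norm_exp_ofReal_mul_I, mul_one, Complex.norm_real, Real.norm_eq_abs,
        abs_of_pos hsM, one_div]
    · intro k
      -- get the constant for k (use 0 for k = k0)
      have hck : ∃ c : ℝ, ∀ m, ∃ n : ℤ,
          dist (t m) (s k0) - dist (t m) (s k) = c + n * lam := by
        by_cases hkk : k = k0
        · exact ⟨0, fun m => ⟨0, by simp [hkk]⟩⟩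
        · exact hc k hkk
      obtain ⟨c, hcm⟩ := hck
      have hterm : ∀ m : Fin M,
          (starRingEnd ℂ) (h k m) * (((Real.sqrt M : ℝ) : ℂ)⁻¹ * Complex.exp ((θ k0 m : ℝ) * Complex.I))
          = ((Real.sqrt M : ℝ) : ℂ)⁻¹ * ((starRingEnd ℂ) (b k) *
              Complex.exp (((2 * Real.pi / lam * c : ℝ) : ℝ) * Complex.I)) := by
        intro m
        obtain ⟨n, hn⟩ := hcm m
        rw [hform, map_mul, ← Complex.exp_conj]
        have hconj : (starRingEnd ℂ) ((θ k m : ℝ) * Complex.I) = -((θ k m : ℝ) * Complex.I) := by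
          simp [Complex.conj_ofReal]
        rw [hconj]
        have hθeq : θ k0 m - θ k m = 2 * Real.pi / lam * c + n * (2 * Real.pi) := by
          simp only [hθdef]
          rw [← mul_sub, hn]
          field_simp
        have hexp : Complex.exp (-((θ k m : ℝ) * Complex.I)) * Complex.exp ((θ k0 m : ℝ) * Complex.I)
            = Complex.exp (((2 * Real.pi / lam * c : ℝ)) * Complex.I) := by
          rw [← Complex.exp_add]
          have : -((θ k m : ℝ) * Complex.I) + (θ k0 m : ℝ) * Complex.I
              = ((θ k0 m - θ k m : ℝ) : ℂ) * Complex.I := by push_cast; ring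
          rw [this, hθeq]
          push_cast
          rw [add_mul, Complex.exp_add]
          have h2pi : Complex.exp ((n : ℂ) * (2 * Real.pi) * Complex.I) = 1 := by
            have := Complex.exp_int_mul_two_pi_mul_I n
            convert this using 2
            ring
          rw [h2pi, mul_one]
        calc (starRingEnd ℂ) (b k) * Complex.exp (-((θ k m : ℝ) * Complex.I)) *
              (((Real.sqrt M : ℝ) : ℂ)⁻¹ * Complex.exp ((θ k0 m : ℝ) * Complex.I))
            = ((Real.sqrt M : ℝ) : ℂ)⁻¹ * ((starRingEnd ℂ) (b k) *
              (Complex.exp (-((θ k m : ℝ) * Complex.I)) * Complex.exp ((θ k0 m : ℝ) * Complex.I))) := by ring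
          _ = _ := by rw [hexp]
      rw [Finset.sum_congr rfl (fun m _ => hterm m), Finset.sum_const, Finset.card_univ,
        Fintype.card_fin, hrhs k]
      rw [nsmul_eq_mul, norm_mul, norm_mul, norm_mul, Complex.norm_natCast, norm_inv,
        Complex.norm_real, Real.norm_eq_abs, abs_of_pos hsM, Complex.norm_exp_ofReal_mul_I, mul_one,
        Complex.norm_conj]
      rw [← mul_assoc, ← div_eq_mul_inv, Real.div_sqrt]
end
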